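/- arXiv:2111.07719 — 2 statements merged into one kernel-verified Lean document; each statement's English description precedes it below -/
import Mathlib

section
/- Let ρ : [0,1] → ℝ be continuous and positive, λ_{n-1} < λ_n real, and u_{n-1}, u_n nontrivial solutions of -y'' = λ_{n-1} ρ y and -y'' = λ_n ρ y on [0,1] with u_n(0) = u_{n-1}(0) = 0, u_n'(0) > 0, u_{n-1}'(0) > 0. If u_{n-1} > 0 and u_n > 0 on an interval (0,c) ⊂ (0,1), then the ratio x ↦ u_n(x)/u_{n-1}(x) is strictly decreasing on (0,c). -/
open Set

/-- If `uₙ₋₁, uₙ` are nontrivial solutions of the string equation for `λₙ₋₁ < λₙ`,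
vanishing at `0` with positive initial slope, and both positive on `(0,c)`,
then `uₙ/uₙ₋₁` is strictly decreasing on `(0,c)`. -/
theorem stmt_2 (ρ um um' um'' un un' un'' : ℝ → ℝ) (lm ln c : ℝ)
    (hρc : ContinuousOn ρ (Icc (0:ℝ) 1))
    (hρpos : ∀ x ∈ Icc (0:ℝ) 1, 0 < ρ x)
    (hlml : lm < ln)
    (hum : ∀ x ∈ Icc (0:ℝ) 1, HasDerivAt um (um' x) x)
    (hum' : ∀ x ∈ Icc (0:ℝ) 1, HasDerivAt um' (um'' x) x)
    (hodem : ∀ x ∈ Icc (0:ℝ) 1, um'' x = -(lm * ρ x * um x))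
    (hun : ∀ x ∈ Icc (0:ℝ) 1, HasDerivAt un (un' x) x)
    (hun' : ∀ x ∈ Icc (0:ℝ) 1, HasDerivAt un' (un'' x) x)
    (hoden : ∀ x ∈ Icc (0:ℝ) 1, un'' x = -(ln * ρ x * un x))
    (humnt : ∃ x ∈ Icc (0:ℝ) 1, um x ≠ 0)
    (hunnt : ∃ x ∈ Icc (0:ℝ) 1, un x ≠ 0)
    (hum0 : um 0 = 0) (hun0 : un 0 = 0)
    (hum'0 : 0 < um' 0) (hun'0 : 0 < un' 0)
    (hc : Ioo (0:ℝ) c ⊆ Ioo (0:ℝ) 1)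
    (humpos : ∀ x ∈ Ioo (0:ℝ) c, 0 < um x)
    (hunpos : ∀ x ∈ Ioo (0:ℝ) c, 0 < un x) :
    StrictAntiOn (fun x => un x / um x) (Ioo (0:ℝ) c) := by
  set W : ℝ → ℝ := fun x => un' x * um x - un x * um' x with hW
  -- membership of Ioo 0 c in Icc 0 1
  have hsub : Ioo (0:ℝ) c ⊆ Icc (0:ℝ) 1 := fun x hx => Ioo_subset_Icc_self (hc hx)
  -- derivative of W
  have hWderiv : ∀ x ∈ Icc (0:ℝ) 1,
      HasDerivAt W ((un'' x * um x + un' x * um' x) - (un' x * um' x + un x * um'' x)) x := by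
    intro x hx
    exact ((hun' x hx).mul (hum x hx)).sub ((hun x hx).mul (hum' x hx))
  have hWderiv_neg : ∀ x ∈ Ioo (0:ℝ) c, deriv W x < 0 := by
    intro x hx
    have hx1 := hsub hx
    have := (hWderiv x hx1).deriv
    rw [this, hodem x hx1, hoden x hx1]
    have hρ := hρpos x hx1
    have hun' := hunpos x hx
    have hum' := humpos x hx
    nlinarith [mul_pos (mul_pos hρ hun') hum']
  have hWcont : ContinuousOn W (Icc (0:ℝ) 1) := fun x hx =>
    ((hWderiv x hx).continuousAt).continuousWithinAt
  have hW0 : W 0 = 0 := by simp [hW, hum0, hun0]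
  -- W < 0 on (0,c)
  have hWneg : ∀ x ∈ Ioo (0:ℝ) c, W x < 0 := by
    intro x hx
    have hx1 := hc hx
    have hIcc : Icc (0:ℝ) x ⊆ Icc (0:ℝ) 1 := Icc_subset_Icc le_rfl (le_of_lt hx1.2)
    have hanti : StrictAntiOn W (Icc (0:ℝ) x) := by
      apply strictAntiOn_of_deriv_neg (convex_Icc _ _) (hWcont.mono hIcc)
      intro y hy
      rw [interior_Icc] at hy
      exact hWderiv_neg y ⟨hy.1, lt_of_lt_of_le hy.2 (le_of_lt hx.2)⟩
    have := hanti (left_mem_Icc.2 (le_of_lt hx1.1)) (right_mem_Icc.2 (le_of_lt hx1.1)) hx1.1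
    rwa [hW0] at this
  -- the ratio
  have hratio : ∀ x ∈ Ioo (0:ℝ) c,
      HasDerivAt (fun x => un x / um x) (W x / (um x)^2) x := by
    intro x hx
    have hx1 := hsub hx
    exact (hun x hx1).div (hum x hx1) (ne_of_gt (humpos x hx))
  apply strictAntiOn_of_deriv_neg (convex_Ioo _ _)
  · exact fun x hx => ((hratio x hx).continuousAt).continuousWithinAt
  · intro x hx
    rw [interior_Ioo] at hx
    rw [(hratio x hx).deriv]
    exact div_neg_of_neg_of_pos (hWneg x hx) (pow_pos (humpos x hx) 2)
end

section
/- Let z_i < z_{i+1}, and let f : [z_i, z_{i+1}] → ℝ be continuous, not identically zero, with f < 0 on (z_i, x₁) ∪ (x₂, z_{i+1}) and f > 0 on (x₁, x₂) for some z_i < x₁ < x₂ < z_{i+1}. Suppose there exist constants α, β ∈ ℝ such that ∫ f dx = α ∫ x f dx and ∫ x² f dx = β ∫ x f dx (integrals over [z_i, z_{i+1}]). Then ∫_{z_i}^{z_{i+1}} x f(x) dx ≠ 0. -/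
open Set MeasureTheory intervalIntegral

/-- If the zeroth and second moments of `f` are proportional to the first
moment, and `f` has the sign pattern `(-,+,-)` with sign changes at `x₁ < x₂`,
then the first moment `∫ x f(x) dx` is nonzero. -/
theorem stmt_7 (zi x1 x2 zi1 : ℝ) (f : ℝ → ℝ) (α β : ℝ)
    (h1 : zi < x1) (h2 : x1 < x2) (h3 : x2 < zi1)
    (hfc : ContinuousOn f (Icc zi zi1))
    (hnz : ∃ x ∈ Icc zi zi1, f x ≠ 0)
    (hneg : ∀ x ∈ Ioo zi x1 ∪ Ioo x2 zi1, f x < 0)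
    (hpos : ∀ x ∈ Ioo x1 x2, 0 < f x)
    (hα : ∫ x in zi..zi1, f x = α * ∫ x in zi..zi1, x * f x)
    (hβ : ∫ x in zi..zi1, x ^ 2 * f x = β * ∫ x in zi..zi1, x * f x) :
    (∫ x in zi..zi1, x * f x) ≠ 0 := by
  intro h0
  have hzz : zi ≤ zi1 := by linarith
  set g : ℝ → ℝ := fun x => -((x - x1) * (x - x2)) * f x with hg
  have hgc : ContinuousOn g (Icc zi zi1) := by
    exact (Continuous.continuousOn (by continuity)).mul hfc
  have hint : ∀ a b : ℝ, zi ≤ a → a ≤ b → b ≤ zi1 →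
      ∀ h : ℝ → ℝ, ContinuousOn h (Icc zi zi1) → IntervalIntegrable h volume a b := by
    intro a b ha hab hb h hc
    exact ContinuousOn.intervalIntegrable (by rw [uIcc_of_le hab]; exact hc.mono (Icc_subset_Icc ha hb))
  -- split ∫ g = combination of moments
  have hi0 := hint zi zi1 le_rfl hzz le_rfl f hfc
  have hi1 : IntervalIntegrable (fun x => x * f x) volume zi zi1 :=
    hint zi zi1 le_rfl hzz le_rfl _ ((continuous_id.continuousOn).mul hfc)
  have hi2 : IntervalIntegrable (fun x => x ^ 2 * f x) volume zi zi1 :=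
    hint zi zi1 le_rfl hzz le_rfl _ (((continuous_pow 2).continuousOn).mul hfc)
  have hgeq : ∀ x : ℝ, g x = (x1 + x2) * (x * f x) - x ^ 2 * f x - x1 * x2 * f x := by
    intro x; simp [hg]; ring
  have hIg : (∫ x in zi..zi1, g x) = (x1 + x2) * (∫ x in zi..zi1, x * f x)
      - (∫ x in zi..zi1, x ^ 2 * f x) - x1 * x2 * (∫ x in zi..zi1, f x) := by
    rw [show (∫ x in zi..zi1, g x) = ∫ x in zi..zi1,
        ((x1 + x2) * (x * f x) - x ^ 2 * f x - x1 * x2 * f x) from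
      intervalIntegral.integral_congr fun x _ => hgeq x]
    rw [intervalIntegral.integral_sub ((hi1.const_mul _).sub hi2) (hi0.const_mul _),
        intervalIntegral.integral_sub (hi1.const_mul _) hi2,
        intervalIntegral.integral_const_mul, intervalIntegral.integral_const_mul]
  have hzero : (∫ x in zi..zi1, g x) = 0 := by
    rw [hIg, h0, hα, hβ, h0]; ring
  -- positivity
  have hmid : 0 < ∫ x in x1..x2, g x := by
    apply intervalIntegral.intervalIntegral_pos_of_pos_on
      (hint x1 x2 h1.le h2.le h3.le _ hgc)
    · intro x hx
      have hf := hpos x hx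
      have : 0 < -((x - x1) * (x - x2)) := by nlinarith [hx.1, hx.2]
      exact mul_pos this hf
    · exact h2
  have hne : ∀ a : ℝ, ∀ᵐ x ∂(volume.restrict (Icc zi zi1)), x ≠ a := by
    intro a
    refine ae_restrict_of_ae ?_
    have : volume ({a} : Set ℝ) = 0 := measure_singleton a
    rw [MeasureTheory.ae_iff]
    simpa using this
  have hleft : 0 ≤ ∫ x in zi..x1, g x := by
    apply intervalIntegral.integral_nonneg_of_ae_restrict h1.le
    have h0' : ∀ᵐ x ∂(volume.restrict (Icc zi x1)), x ≠ zi :=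
      ae_restrict_of_ae (by
        have : volume ({zi} : Set ℝ) = 0 := measure_singleton zi
        rw [MeasureTheory.ae_iff]; simpa using this)
    filter_upwards [ae_restrict_mem measurableSet_Icc, h0'] with x hx hxne
    rcases eq_or_lt_of_le hx.2 with h | h
    · simp [hg, h]
    · have hf : f x < 0 := hneg x (Or.inl ⟨lt_of_le_of_ne hx.1 (Ne.symm hxne), h⟩)
      have hq : -((x - x1) * (x - x2)) ≤ 0 := by nlinarith [hx.2, h2]
      have := mul_nonneg (neg_nonneg.2 hq) (neg_nonneg.2 hf.le)
      simpa [hg] using this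
  have hright : 0 ≤ ∫ x in x2..zi1, g x := by
    apply intervalIntegral.integral_nonneg_of_ae_restrict h3.le
    have h0' : ∀ᵐ x ∂(volume.restrict (Icc x2 zi1)), x ≠ zi1 :=
      ae_restrict_of_ae (by
        have : volume ({zi1} : Set ℝ) = 0 := measure_singleton zi1
        rw [MeasureTheory.ae_iff]; simpa using this)
    filter_upwards [ae_restrict_mem measurableSet_Icc, h0'] with x hx hxne
    rcases eq_or_lt_of_le hx.1 with h | h
    · simp [hg, ← h]
    · have hf : f x < 0 := hneg x (Or.inr ⟨h, lt_of_le_of_ne hx.2 hxne⟩)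
      have hq : -((x - x1) * (x - x2)) ≤ 0 := by nlinarith [hx.1, h2]
      have := mul_nonneg (neg_nonneg.2 hq) (neg_nonneg.2 hf.le)
      simpa [hg] using this
  have hsum : (∫ x in zi..x1, g x) + (∫ x in x1..x2, g x) + (∫ x in x2..zi1, g x)
      = ∫ x in zi..zi1, g x := by
    rw [intervalIntegral.integral_add_adjacent_intervals
        (hint zi x1 le_rfl h1.le (by linarith) _ hgc)
        (hint x1 x2 h1.le h2.le h3.le _ hgc),
      intervalIntegral.integral_add_adjacent_intervals
        (hint zi x2 le_rfl (by linarith) h3.le _ hgc)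
        (hint x2 zi1 (by linarith) h3.le le_rfl _ hgc)]
  linarith [hsum, hzero, hmid, hleft, hright]
end
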